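/- Existence of a Hilbert midpoint: for any distinct p, q ∈ int(Ω), there exists a unique point c on the open segment from p to q with d_Ω(p,c) = d_Ω(c,q). -/

import Mathlib

open Filter Topology
open scoped Classical

/-- The parameter at which the ray `t ↦ p + t • v` exits the set `Ω`. -/
noncomputable def exitTime (Ω : Set (EuclideanSpace ℝ (Fin 2)))
    (p v : EuclideanSpace ℝ (Fin 2)) : ℝ :=
  sSup {t : ℝ | p + t • v ∈ Ω}

/-- The endpoint of the chord of `Ω` from `p` in direction `v`. -/
noncomputable def chordEnd (Ω : Set (EuclideanSpace ℝ (Fin 2)))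
    (p v : EuclideanSpace ℝ (Fin 2)) : EuclideanSpace ℝ (Fin 2) :=
  p + exitTime Ω p v • v

/-- The Hilbert distance in the convex body `Ω`: for distinct `p q`, with chord
endpoints `p' = chordEnd Ω p (p - q)` (beyond `p`) and `q' = chordEnd Ω q (q - p)`
(beyond `q`), ordered `⟨p', p, q, q'⟩`,
`d_Ω(p,q) = (1/2) log ((‖q - p'‖/‖p - p'‖) * (‖p - q'‖/‖q - q'‖))`. -/
noncomputable def hilbertDist (Ω : Set (EuclideanSpace ℝ (Fin 2)))
    (p q : EuclideanSpace ℝ (Fin 2)) : ℝ :=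
  if p = q then 0
  else
    (1 / 2) * Real.log
      ((‖q - chordEnd Ω p (p - q)‖ / ‖p - chordEnd Ω p (p - q)‖) *
        (‖p - chordEnd Ω q (q - p)‖ / ‖q - chordEnd Ω q (q - p)‖))

/-- A convex body in the plane: compact, convex, with nonempty interior. -/
def IsConvexBody (Ω : Set (EuclideanSpace ℝ (Fin 2))) : Prop :=
  IsCompact Ω ∧ Convex ℝ Ω ∧ (interior Ω).Nonempty

section Helpers

variable {Ω : Set (EuclideanSpace ℝ (Fin 2))} {p v : EuclideanSpace ℝ (Fin 2)}

lemma exitSet_bddAbove (hb : Bornology.IsBounded Ω) (hv : v ≠ 0) :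
    BddAbove {t : ℝ | p + t • v ∈ Ω} := by
  obtain ⟨R, hR⟩ := hb.subset_closedBall 0
  refine ⟨(R + ‖p‖) / ‖v‖, fun t ht => ?_⟩
  have h1 : ‖p + t • v‖ ≤ R := by
    have := hR ht; simpa [Metric.mem_closedBall, dist_eq_norm] using this
  have h2 : ‖t • v‖ ≤ R + ‖p‖ := by
    have : ‖t • v‖ = ‖(p + t • v) - p‖ := by congr 1; abel
    rw [this]
    calc ‖(p + t • v) - p‖ ≤ ‖p + t • v‖ + ‖p‖ := norm_sub_le _ _
      _ ≤ R + ‖p‖ := by linarith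
  have hvpos : 0 < ‖v‖ := norm_pos_iff.mpr hv
  rw [norm_smul] at h2
  have : |t| ≤ (R + ‖p‖) / ‖v‖ := by
    rw [le_div_iff₀ hvpos]; simpa using h2
  exact (le_abs_self t).trans this

lemma exitSet_nonempty (hp : p ∈ Ω) : ({t : ℝ | p + t • v ∈ Ω}).Nonempty :=
  ⟨0, by simpa using hp⟩

lemma exitTime_pos (hb : Bornology.IsBounded Ω) (hp : p ∈ interior Ω) (hv : v ≠ 0) :
    0 < exitTime Ω p v := by
  obtain ⟨r, hr, hball⟩ := Metric.isOpen_iff.mp isOpen_interior p hp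
  have hvpos : 0 < ‖v‖ := norm_pos_iff.mpr hv
  set ε := r / (2 * ‖v‖) with hε
  have hεpos : 0 < ε := by positivity
  have hmem : p + ε • v ∈ Ω := by
    refine interior_subset (hball ?_)
    rw [Metric.mem_ball, dist_eq_norm]
    have : ‖p + ε • v - p‖ = ε * ‖v‖ := by
      rw [show p + ε • v - p = ε • v by abel, norm_smul, Real.norm_eq_abs, abs_of_pos hεpos]
    rw [this, hε]
    rw [div_mul_eq_mul_div, mul_comm]
    rw [div_lt_iff₀ (by positivity)]
    nlinarith
  have : ε ≤ exitTime Ω p v :=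
    le_csSup (exitSet_bddAbove hb hv) hmem
  linarith

lemma exitTime_smul (hb : Bornology.IsBounded Ω) (hp : p ∈ Ω) (hv : v ≠ 0)
    {t : ℝ} (ht : 0 < t) : exitTime Ω p (t • v) = exitTime Ω p v / t := by
  have hne := exitSet_nonempty (v := v) hp
  have hbdd := exitSet_bddAbove (p := p) hb hv
  have hlub := isLUB_csSup hne hbdd
  have key : ∀ u : ℝ, p + u • (t • v) ∈ Ω ↔ (t * u) ∈ {s : ℝ | p + s • v ∈ Ω} := by
    intro u; rw [smul_smul, mul_comm]; exact Iff.rfl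
  rw [exitTime, exitTime]
  refine IsLUB.csSup_eq ⟨fun u hu => ?_, fun b hub => ?_⟩ ?_
  · have : t * u ≤ sSup {s : ℝ | p + s • v ∈ Ω} := hlub.1 ((key u).mp hu)
    rw [le_div_iff₀ ht]; linarith [this]
  · have : ∀ x ∈ {s : ℝ | p + s • v ∈ Ω}, x ≤ t * b := by
      intro x hx
      have hx' : p + (x / t) • (t • v) ∈ Ω := by
        rw [smul_smul, div_mul_cancel₀ _ ht.ne']; exact hx
      have := hub hx'
      rw [div_le_iff₀ ht] at this; linarith
    have := hlub.2 this
    rw [div_le_iff₀ ht]; linarith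
  · obtain ⟨x, hx⟩ := hne
    exact ⟨x / t, by rw [Set.mem_setOf_eq, smul_smul, div_mul_cancel₀ _ ht.ne']; exact hx⟩

lemma chordEnd_smul (hb : Bornology.IsBounded Ω) (hp : p ∈ Ω) (hv : v ≠ 0)
    {t : ℝ} (ht : 0 < t) : chordEnd Ω p (t • v) = chordEnd Ω p v := by
  rw [chordEnd, chordEnd, exitTime_smul hb hp hv ht, smul_smul, div_mul_cancel₀ _ ht.ne']

lemma exitTime_translate (hb : Bornology.IsBounded Ω) (hp : p ∈ Ω) (hv : v ≠ 0)
    (a : ℝ) (_ha : p + a • v ∈ Ω) :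
    exitTime Ω (p + a • v) v = exitTime Ω p v - a := by
  have hne := exitSet_nonempty (v := v) hp
  have hbdd := exitSet_bddAbove (p := p) hb hv
  have hlub := isLUB_csSup hne hbdd
  have key : ∀ u : ℝ, (p + a • v) + u • v = p + (a + u) • v := by
    intro u; rw [add_smul]; abel
  rw [exitTime, exitTime]
  refine IsLUB.csSup_eq ⟨fun u hu => ?_, fun b hub => ?_⟩ ?_
  · have : a + u ≤ sSup {s : ℝ | p + s • v ∈ Ω} := by
      apply hlub.1; rw [Set.mem_setOf_eq, ← key]; exact hu
    linarith
  · have : ∀ x ∈ {s : ℝ | p + s • v ∈ Ω}, x ≤ a + b := by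
      intro x hx
      have : x - a ≤ b := by
        apply hub
        show (p + a • v) + (x - a) • v ∈ Ω
        rw [key]; simpa using hx
      linarith
    linarith [hlub.2 this]
  · exact ⟨0 - a, by rw [Set.mem_setOf_eq, key]; simpa using hp⟩

lemma chordEnd_translate (hb : Bornology.IsBounded Ω) (hp : p ∈ Ω) (hv : v ≠ 0)
    (a : ℝ) (ha : p + a • v ∈ Ω) :
    chordEnd Ω (p + a • v) v = chordEnd Ω p v := by
  rw [chordEnd, chordEnd, exitTime_translate hb hp hv a ha, sub_smul]
  abel

/-- The normalized parameter of the Hilbert midpoint. -/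
noncomputable def hmid (α β : ℝ) : ℝ :=
  ((1 + β) * Real.sqrt (α * (1 + α)) - α * Real.sqrt (β * (1 + β))) /
    (Real.sqrt (α * (1 + α)) + Real.sqrt (β * (1 + β)))

lemma hmid_mem {α β : ℝ} (hα : 0 < α) (hβ : 0 < β) : hmid α β ∈ Set.Ioo (0:ℝ) 1 := by
  rw [Set.mem_Ioo, hmid]
  set r := Real.sqrt (α * (1 + α)) with hr
  set w := Real.sqrt (β * (1 + β)) with hw
  have hrpos : 0 < r := Real.sqrt_pos.mpr (by nlinarith)
  have hwpos : 0 < w := Real.sqrt_pos.mpr (by nlinarith)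
  have h1 : α * w < (1 + β) * r := by
    have e1 : α * w = Real.sqrt (α^2 * (β * (1 + β))) := by
      rw [Real.sqrt_mul (by positivity), Real.sqrt_sq hα.le]
    have e2 : (1 + β) * r = Real.sqrt ((1 + β)^2 * (α * (1 + α))) := by
      rw [Real.sqrt_mul (by positivity), Real.sqrt_sq (by positivity)]
    rw [e1, e2]
    apply Real.sqrt_lt_sqrt (by positivity)
    nlinarith
  have h2 : β * r < (1 + α) * w := by
    have e1 : β * r = Real.sqrt (β^2 * (α * (1 + α))) := by
      rw [Real.sqrt_mul (by positivity), Real.sqrt_sq hβ.le]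
    have e2 : (1 + α) * w = Real.sqrt ((1 + α)^2 * (β * (1 + β))) := by
      rw [Real.sqrt_mul (by positivity), Real.sqrt_sq (by positivity)]
    rw [e1, e2]
    apply Real.sqrt_lt_sqrt (by positivity)
    nlinarith
  constructor
  · apply div_pos (by linarith) (by linarith)
  · rw [div_lt_one (by linarith)]; linarith

lemma hmid_iff {α β s : ℝ} (hα : 0 < α) (hβ : 0 < β) (hs : 0 < s) (hs1 : s < 1) :
    ((s + α) / α) * ((1 + β) / (1 + β - s)) = ((1 + α) / (s + α)) * ((1 + β - s) / β) ↔
      s = hmid α β := by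
  set r := Real.sqrt (α * (1 + α)) with hrdef
  set w := Real.sqrt (β * (1 + β)) with hwdef
  have hrpos : 0 < r := Real.sqrt_pos.mpr (by nlinarith)
  have hwpos : 0 < w := Real.sqrt_pos.mpr (by nlinarith)
  have hr2 : r ^ 2 = α * (1 + α) := Real.sq_sqrt (by positivity)
  have hw2 : w ^ 2 = β * (1 + β) := Real.sq_sqrt (by positivity)
  have hbs : 0 < 1 + β - s := by linarith
  have hsα : 0 < s + α := by linarith
  have step1 : ((s + α) / α) * ((1 + β) / (1 + β - s)) =
      ((1 + α) / (s + α)) * ((1 + β - s) / β) ↔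
      (s + α) * w = (1 + β - s) * r := by
    rw [div_mul_div_comm, div_mul_div_comm, div_eq_div_iff (by positivity) (by positivity)]
    constructor
    · intro h
      have hsq : ((s + α) * w) ^ 2 = ((1 + β - s) * r) ^ 2 := by
        rw [mul_pow, mul_pow, hr2, hw2]; linear_combination h
      have hfac : ((s + α) * w - (1 + β - s) * r) * ((s + α) * w + (1 + β - s) * r) = 0 := by
        linear_combination hsq
      rcases mul_eq_zero.mp hfac with h0 | h0
      · linarith
      · nlinarith
    · intro h
      have hsq : ((s + α) * w) ^ 2 = ((1 + β - s) * r) ^ 2 := by rw [h]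
      rw [mul_pow, mul_pow, hr2, hw2] at hsq
      linear_combination hsq
  rw [step1]
  have step2 : (s + α) * w = (1 + β - s) * r ↔ s * (r + w) = (1 + β) * r - α * w := by
    constructor <;> intro h <;> linear_combination h
  rw [step2, hmid, ← hrdef, ← hwdef, eq_div_iff (by positivity)]

end Helpers

/-- Existence and uniqueness of the Hilbert midpoint on the open
segment between two distinct interior points. -/
theorem hilbert_midpoint_existsUnique (Ω : Set (EuclideanSpace ℝ (Fin 2)))
    (hΩ : IsConvexBody Ω) (p q : EuclideanSpace ℝ (Fin 2))
    (hp : p ∈ interior Ω) (hq : q ∈ interior Ω) (hne : p ≠ q) :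
    ∃! c : EuclideanSpace ℝ (Fin 2),
      c ∈ openSegment ℝ p q ∧ hilbertDist Ω p c = hilbertDist Ω c q := by
  obtain ⟨hcomp, hconv, -⟩ := hΩ
  have hb := hcomp.isBounded
  have hpΩ : p ∈ Ω := interior_subset hp
  have hqΩ : q ∈ Ω := interior_subset hq
  set v := q - p with hv
  have hvne : v ≠ 0 := by rw [hv]; exact sub_ne_zero.mpr (Ne.symm hne)
  have hvne' : -v ≠ 0 := neg_ne_zero.mpr hvne
  have hL : 0 < ‖v‖ := norm_pos_iff.mpr hvne
  set α := exitTime Ω p (-v) with hα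
  have hαpos : 0 < α := exitTime_pos hb hp hvne'
  set β := exitTime Ω q v with hβ
  have hβpos : 0 < β := exitTime_pos hb hq hvne
  have hq1 : q = p + (1:ℝ) • v := by rw [hv]; module
  have h1mem : p + (1:ℝ) • v ∈ Ω := by rw [← hq1]; exact hqΩ
  have he : exitTime Ω p v = 1 + β := by
    have h := exitTime_translate hb hpΩ hvne 1 h1mem
    rw [← hq1] at h
    rw [← hβ] at h
    linarith
  set P' := chordEnd Ω p (-v) with hP'
  set Q' := chordEnd Ω p v with hQ'
  have hPeq : P' = p + α • (-v) := by rw [hP']; simp only [chordEnd]; rfl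
  have hQeq : Q' = p + (1 + β) • v := by rw [hQ']; simp only [chordEnd]; rw [he]
  have key : ∀ s : ℝ, 0 < s → s < 1 →
      (hilbertDist Ω p (p + s • v) = hilbertDist Ω (p + s • v) q ↔ s = hmid α β) := by
    intro s hs0 hs1
    set c := p + s • v with hc
    have hcseg : c ∈ openSegment ℝ p q := by
      rw [openSegment_eq_image']
      exact ⟨s, ⟨hs0, hs1⟩, by rw [← hv, hc]⟩
    have hcΩ : c ∈ Ω :=
      hconv.segment_subset hpΩ hqΩ (openSegment_subset_segment ℝ p q hcseg)
    have hpc : p ≠ c := by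
      rw [hc]; intro h0
      rcases smul_eq_zero.mp (left_eq_add.mp h0) with h | h
      · exact hs0.ne' h
      · exact hvne h
    have hcq : c ≠ q := by
      rw [hc, hq1]; intro h0
      have h2 : s = 1 := smul_left_injective ℝ hvne (add_left_cancel h0)
      exact hs1.ne h2
    have A1 : chordEnd Ω p (p - c) = P' := by
      have h : p - c = s • (-v) := by rw [hc]; module
      rw [h, chordEnd_smul hb hpΩ hvne' hs0]
    have A2 : chordEnd Ω c (c - p) = Q' := by
      have h : c - p = s • v := by rw [hc]; module
      rw [h, chordEnd_smul hb hcΩ hvne hs0, hc,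
        chordEnd_translate hb hpΩ hvne s (by rw [← hc]; exact hcΩ)]
    have A3 : chordEnd Ω c (c - q) = P' := by
      have h : c - q = (1 - s) • (-v) := by rw [hc, hq1]; module
      have hc2 : c = p + (-s) • (-v) := by rw [hc]; module
      rw [h, chordEnd_smul hb hcΩ hvne' (by linarith), hc2,
        chordEnd_translate hb hpΩ hvne' (-s) (by rw [← hc2]; exact hcΩ)]
    have A4 : chordEnd Ω q (q - c) = Q' := by
      have h : q - c = (1 - s) • v := by rw [hc, hq1]; module
      rw [h, chordEnd_smul hb hqΩ hvne (by linarith), hq1,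
        chordEnd_translate hb hpΩ hvne 1 h1mem]
    have n1 : ‖c - P'‖ = (s + α) * ‖v‖ := by
      have h : c - P' = (s + α) • v := by rw [hc, hPeq]; module
      rw [h, norm_smul, Real.norm_eq_abs, abs_of_pos (by linarith)]
    have n2 : ‖p - P'‖ = α * ‖v‖ := by
      have h : p - P' = α • v := by rw [hPeq]; module
      rw [h, norm_smul, Real.norm_eq_abs, abs_of_pos hαpos]
    have n3 : ‖p - Q'‖ = (1 + β) * ‖v‖ := by
      have h : p - Q' = (-(1 + β)) • v := by rw [hQeq]; module
      rw [h, norm_smul, Real.norm_eq_abs, abs_neg, abs_of_pos (by linarith)]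
    have n4 : ‖c - Q'‖ = (1 + β - s) * ‖v‖ := by
      have h : c - Q' = (-(1 + β - s)) • v := by rw [hc, hQeq]; module
      rw [h, norm_smul, Real.norm_eq_abs, abs_neg, abs_of_pos (by linarith)]
    have n5 : ‖q - P'‖ = (1 + α) * ‖v‖ := by
      have h : q - P' = (1 + α) • v := by rw [hq1, hPeq]; module
      rw [h, norm_smul, Real.norm_eq_abs, abs_of_pos (by linarith)]
    have n6 : ‖q - Q'‖ = β * ‖v‖ := by
      have h : q - Q' = (-β) • v := by rw [hq1, hQeq]; module
      rw [h, norm_smul, Real.norm_eq_abs, abs_neg, abs_of_pos hβpos]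
    have hd1 : hilbertDist Ω p c =
        1 / 2 * Real.log (((s + α) * ‖v‖ / (α * ‖v‖)) *
          ((1 + β) * ‖v‖ / ((1 + β - s) * ‖v‖))) := by
      unfold hilbertDist
      rw [if_neg hpc, A1, A2, n1, n2, n3, n4]
    have hd2 : hilbertDist Ω c q =
        1 / 2 * Real.log (((1 + α) * ‖v‖ / ((s + α) * ‖v‖)) *
          ((1 + β - s) * ‖v‖ / (β * ‖v‖))) := by
      unfold hilbertDist
      rw [if_neg hcq, A3, A4, n5, n1, n4, n6]
    have hstrip : ∀ a b : ℝ, a * ‖v‖ / (b * ‖v‖) = a / b :=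
      fun a b => mul_div_mul_right a b hL.ne'
    have hXY : ((s + α) * ‖v‖ / (α * ‖v‖)) * ((1 + β) * ‖v‖ / ((1 + β - s) * ‖v‖)) =
        ((1 + α) * ‖v‖ / ((s + α) * ‖v‖)) * ((1 + β - s) * ‖v‖ / (β * ‖v‖)) ↔
        s = hmid α β := by
      rw [hstrip, hstrip, hstrip, hstrip]
      exact hmid_iff hαpos hβpos hs0 hs1
    rw [hd1, hd2, ← hXY]
    constructor
    · intro h
      refine Real.log_injOn_pos (Set.mem_Ioi.mpr ?_) (Set.mem_Ioi.mpr ?_) (by linarith)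
      · exact mul_pos (div_pos (mul_pos (by linarith) hL) (mul_pos hαpos hL))
          (div_pos (mul_pos (by linarith) hL) (mul_pos (by linarith) hL))
      · exact mul_pos (div_pos (mul_pos (by linarith) hL) (mul_pos (by linarith) hL))
          (div_pos (mul_pos (by linarith) hL) (mul_pos hβpos hL))
    · intro h; rw [h]
  obtain ⟨hm0, hm1⟩ := hmid_mem hαpos hβpos
  refine ⟨p + hmid α β • v, ⟨?_, ?_⟩, ?_⟩
  · rw [openSegment_eq_image']
    exact ⟨hmid α β, ⟨hm0, hm1⟩, by rw [← hv]⟩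
  · exact (key _ hm0 hm1).mpr rfl
  · rintro c ⟨hcseg, hceq⟩
    rw [openSegment_eq_image'] at hcseg
    obtain ⟨s, ⟨hs0, hs1⟩, hcs⟩ := hcseg
    rw [← hv] at hcs
    rw [← hcs] at hceq ⊢
    have hs := (key s hs0 hs1).mp hceq
    rw [hs]
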